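/- arXiv:1801.07609 — 5 statements merged into one kernel-verified Lean document; each statement's English description precedes it below -/
import Mathlib

section
/- For all x, y in ℝⁿ, d_h(x,y) ≤ d_h(x,0) + d_h(0,y), with equality if and only if x = t·y or y = t·x for some real t ≤ 0. -/
noncomputable def arcosh (t : ℝ) : ℝ := Real.log (t + Real.sqrt (t ^ 2 - 1))

lemma one_le_sqrt_one_add_sq (p : ℝ) : 1 ≤ Real.sqrt (1 + p ^ 2) := by
  have h := Real.sqrt_le_sqrt (show (1:ℝ) ≤ 1 + p ^ 2 by nlinarith [sq_nonneg p])
  simpa using h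

lemma arcosh_le_arcosh {u v : ℝ} (hu : 1 ≤ u) (huv : u ≤ v) : arcosh u ≤ arcosh v := by
  unfold arcosh
  have h0 : (0:ℝ) < u + Real.sqrt (u ^ 2 - 1) := by
    have := Real.sqrt_nonneg (u ^ 2 - 1); linarith
  apply Real.log_le_log h0
  have : Real.sqrt (u ^ 2 - 1) ≤ Real.sqrt (v ^ 2 - 1) :=
    Real.sqrt_le_sqrt (by nlinarith)
  linarith

lemma arcosh_lt_arcosh {u v : ℝ} (hu : 1 ≤ u) (huv : u < v) : arcosh u < arcosh v := by
  unfold arcosh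
  have h0 : (0:ℝ) < u + Real.sqrt (u ^ 2 - 1) := by
    have := Real.sqrt_nonneg (u ^ 2 - 1); linarith
  apply Real.log_lt_log h0
  have : Real.sqrt (u ^ 2 - 1) ≤ Real.sqrt (v ^ 2 - 1) :=
    Real.sqrt_le_sqrt (by nlinarith)
  linarith

lemma arcosh_inj {u v : ℝ} (hu : 1 ≤ u) (hv : 1 ≤ v) (h : arcosh u = arcosh v) : u = v := by
  rcases lt_trichotomy u v with h1 | h1 | h1
  · exact absurd h (ne_of_lt (arcosh_lt_arcosh hu h1))
  · exact h1
  · exact absurd h.symm (ne_of_lt (arcosh_lt_arcosh hv h1))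

lemma arcosh_eq' (p : ℝ) (hp : 0 ≤ p) :
    arcosh (Real.sqrt (1 + p ^ 2)) = Real.log (Real.sqrt (1 + p ^ 2) + p) := by
  unfold arcosh
  have h : Real.sqrt (1 + p ^ 2) ^ 2 - 1 = p ^ 2 := by
    rw [Real.sq_sqrt (by positivity)]; ring
  rw [h, Real.sqrt_sq hp]

lemma arcosh_add (p q : ℝ) (hp : 0 ≤ p) (hq : 0 ≤ q) :
    arcosh (Real.sqrt (1 + p ^ 2) * Real.sqrt (1 + q ^ 2) + p * q)
      = arcosh (Real.sqrt (1 + p ^ 2)) + arcosh (Real.sqrt (1 + q ^ 2)) := by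
  set A := Real.sqrt (1 + p ^ 2) with hAdef
  set B := Real.sqrt (1 + q ^ 2) with hBdef
  have hA1 : 1 ≤ A := one_le_sqrt_one_add_sq p
  have hB1 : 1 ≤ B := one_le_sqrt_one_add_sq q
  have hA2 : A ^ 2 = 1 + p ^ 2 := Real.sq_sqrt (by positivity)
  have hB2 : B ^ 2 = 1 + q ^ 2 := Real.sq_sqrt (by positivity)
  have key : (A * B + p * q) ^ 2 - 1 = (A * q + B * p) ^ 2 := by nlinarith [hA2, hB2]
  rw [arcosh, key, Real.sqrt_sq (by positivity), arcosh_eq' p hp, arcosh_eq' q hq,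
    ← Real.log_mul (by positivity) (by positivity)]
  congr 1
  ring

noncomputable def br {n : ℕ} (x : EuclideanSpace ℝ (Fin n)) : ℝ :=
  Real.sqrt (1 + ‖x‖ ^ 2)

noncomputable def dh {n : ℕ} (x y : EuclideanSpace ℝ (Fin n)) : ℝ :=
  arcosh (br x * br y - inner ℝ x y)

noncomputable def T {n : ℕ} (y x : EuclideanSpace ℝ (Fin n)) : EuclideanSpace ℝ (Fin n) :=
  x + (br x + inner ℝ x y / (br y + 1)) • y

theorem dh_tri_through_zero {n : ℕ} (x y : EuclideanSpace ℝ (Fin n)) :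
    dh x y ≤ dh x 0 + dh 0 y ∧
    (dh x y = dh x 0 + dh 0 y ↔ ∃ t : ℝ, t ≤ 0 ∧ (x = t • y ∨ y = t • x)) := by
  set s := ‖x‖ with hs
  set t := ‖y‖ with ht
  have hs0 : 0 ≤ s := norm_nonneg x
  have ht0 : 0 ≤ t := norm_nonneg y
  set c : ℝ := inner ℝ x y with hc
  set A := Real.sqrt (1 + s ^ 2) with hA
  set B := Real.sqrt (1 + t ^ 2) with hB
  have hA1 : 1 ≤ A := one_le_sqrt_one_add_sq s
  have hB1 : 1 ≤ B := one_le_sqrt_one_add_sq t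
  have hA2 : A ^ 2 = 1 + s ^ 2 := Real.sq_sqrt (by positivity)
  have hB2 : B ^ 2 = 1 + t ^ 2 := Real.sq_sqrt (by positivity)
  have hAB : 1 + s * t ≤ A * B := by
    have hsq : (1 + s * t) ^ 2 ≤ (1 + s ^ 2) * (1 + t ^ 2) := by nlinarith [sq_nonneg (s - t)]
    calc 1 + s * t = Real.sqrt ((1 + s * t) ^ 2) := (Real.sqrt_sq (by positivity)).symm
      _ ≤ Real.sqrt ((1 + s ^ 2) * (1 + t ^ 2)) := Real.sqrt_le_sqrt hsq
      _ = A * B := by rw [hA, hB, ← Real.sqrt_mul (by positivity)]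
  have hcs : |c| ≤ s * t := abs_real_inner_le_norm x y
  have hcs1 : -c ≤ s * t := by have := abs_le.mp hcs; linarith [this.1]
  have hcs2 : c ≤ s * t := (abs_le.mp hcs).2
  -- rewrite dh x 0 + dh 0 y
  have hbr0 : br (0 : EuclideanSpace ℝ (Fin n)) = 1 := by
    simp [br]
  have hdx0 : dh x 0 = arcosh A := by
    simp [dh, hbr0, br, ← hs, ← hA]
  have hd0y : dh 0 y = arcosh B := by
    simp [dh, hbr0, br, ← ht, ← hB]
  have hsum : dh x 0 + dh 0 y = arcosh (A * B + s * t) := by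
    rw [hdx0, hd0y, ← arcosh_add s t hs0 ht0]
  have hdxy : dh x y = arcosh (A * B - c) := rfl
  have hu1 : 1 ≤ A * B - c := by linarith
  have hv1 : 1 ≤ A * B + s * t := by linarith
  have hle : dh x y ≤ dh x 0 + dh 0 y := by
    rw [hdxy, hsum]
    exact arcosh_le_arcosh hu1 (by linarith)
  refine ⟨hle, ?_, ?_⟩
  · -- equality → antiparallel
    intro h
    rw [hdxy, hsum] at h
    have harg : A * B - c = A * B + s * t := arcosh_inj hu1 hv1 h
    have hcst : c = -(s * t) := by linarith
    -- show ‖y‖ • x + ‖x‖ • y = 0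
    have hzero : t • x + s • y = 0 := by
      have hn : ‖t • x + s • y‖ ^ 2 = 0 := by
        have h1 := norm_add_sq_real (t • x) (s • y)
        rw [real_inner_smul_left, real_inner_smul_right, norm_smul, norm_smul,
          Real.norm_eq_abs, Real.norm_eq_abs, abs_of_nonneg ht0, abs_of_nonneg hs0,
          ← hs, ← ht, ← hc] at h1
        rw [h1]
        nlinarith [hcst]
      have := pow_eq_zero_iff (n := 2) (by norm_num) |>.mp hn
      exact norm_eq_zero.mp this
    by_cases hy : y = 0
    · exact ⟨0, le_refl 0, Or.inr (by simp [hy])⟩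
    · have htpos : 0 < t := by rw [ht]; exact norm_pos_iff.mpr hy
      have ht' : t ≠ 0 := ne_of_gt htpos
      refine ⟨-(s / t), neg_nonpos.mpr (div_nonneg hs0 ht0), Or.inl ?_⟩
      have h2 : t • x = (-s) • y := by
        rw [neg_smul, eq_neg_iff_add_eq_zero]; exact hzero
      have h3 := congrArg (fun z => t⁻¹ • z) h2
      simp only [smul_smul] at h3
      rw [inv_mul_cancel₀ ht', one_smul] at h3
      rw [h3]
      congr 1
      field_simp
  · -- antiparallel → equality
    rintro ⟨r, hr, hxy | hyx⟩
    · have hcval : c = -(s * t) := by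
        rw [hc, hxy, real_inner_smul_left, real_inner_self_eq_norm_sq, ← ht]
        have hsval : s = -r * t := by
          rw [hs, hxy, norm_smul, Real.norm_eq_abs, abs_of_nonpos hr, ← ht]
        rw [hsval]; ring
      rw [hdxy, hsum, hcval]; ring_nf
    · have hcval : c = -(s * t) := by
        rw [hc, hyx, real_inner_smul_right, real_inner_self_eq_norm_sq, ← hs]
        have htval : t = -r * s := by
          rw [ht, hyx, norm_smul, Real.norm_eq_abs, abs_of_nonpos hr, ← hs]
        rw [htval]; ring
      rw [hdxy, hsum, hcval]; ring_nf
end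

section
/- For any y ∈ ℝⁿ and all a, b ∈ ℝⁿ, d_h(T_y(a), T_y(b)) = d_h(a,b), i.e., the hyperbolic translation T_y preserves the hyperbolic distance. -/
lemma br_sq {n : ℕ} (x : EuclideanSpace ℝ (Fin n)) : br x ^ 2 = 1 + ‖x‖ ^ 2 :=
  Real.sq_sqrt (by positivity)

lemma br_ge_norm {n : ℕ} (x : EuclideanSpace ℝ (Fin n)) : ‖x‖ ≤ br x := by
  rw [br]
  calc ‖x‖ = Real.sqrt (‖x‖ ^ 2) := by rw [Real.sqrt_sq (norm_nonneg x)]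
  _ ≤ Real.sqrt (1 + ‖x‖ ^ 2) := Real.sqrt_le_sqrt (by linarith)

lemma br_pos {n : ℕ} (x : EuclideanSpace ℝ (Fin n)) : 0 < br x := by
  rw [br]; positivity

lemma key_nonneg {n : ℕ} (x y : EuclideanSpace ℝ (Fin n)) :
    0 ≤ br x * br y + (inner ℝ x y : ℝ) := by
  have h1 : |(inner ℝ x y : ℝ)| ≤ ‖x‖ * ‖y‖ := abs_real_inner_le_norm x y
  have h2 : ‖x‖ * ‖y‖ ≤ br x * br y :=
    mul_le_mul (br_ge_norm x) (br_ge_norm y) (norm_nonneg y) (br_pos x).le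
  have := abs_le.mp h1
  linarith [this.1]

lemma norm_add_smul_sq {n : ℕ} (x y : EuclideanSpace ℝ (Fin n)) (c : ℝ) :
    ‖x + c • y‖ ^ 2 = ‖x‖ ^ 2 + 2 * c * (inner ℝ x y : ℝ) + c ^ 2 * ‖y‖ ^ 2 := by
  rw [norm_add_sq_real, real_inner_smul_right, norm_smul]
  simp [mul_pow, sq_abs]
  ring

lemma br_T {n : ℕ} (y x : EuclideanSpace ℝ (Fin n)) :
    br (T y x) = br x * br y + (inner ℝ x y : ℝ) := by
  have hsq : 1 + ‖T y x‖ ^ 2 = (br x * br y + (inner ℝ x y : ℝ)) ^ 2 := by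
    rw [T, norm_add_smul_sq]
    have hy := br_sq y
    have hx := br_sq x
    have hy1 : br y + 1 ≠ 0 := by have := br_pos y; linarith
    have hny : ‖y‖ ^ 2 = br y ^ 2 - 1 := by linarith
    have hnx : ‖x‖ ^ 2 = br x ^ 2 - 1 := by linarith
    rw [hny, hnx]
    set p := (inner ℝ x y : ℝ)
    set A := br x
    set s := br y
    field_simp
    ring
  rw [br, hsq, Real.sqrt_sq (key_nonneg x y)]

lemma inner_T {n : ℕ} (y a b : EuclideanSpace ℝ (Fin n)) :
    (inner ℝ (T y a) (T y b) : ℝ) =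
      (inner ℝ a b : ℝ) + (br b + inner ℝ b y / (br y + 1)) * (inner ℝ a y : ℝ)
        + (br a + inner ℝ a y / (br y + 1)) * (inner ℝ b y : ℝ)
        + (br a + inner ℝ a y / (br y + 1)) * (br b + inner ℝ b y / (br y + 1)) * ‖y‖ ^ 2 := by
  rw [T, T, inner_add_left, inner_add_right, inner_add_right,
    real_inner_smul_right, real_inner_smul_left, real_inner_smul_left,
    real_inner_smul_right, real_inner_self_eq_norm_sq, real_inner_comm y b]
  ring

theorem T_preserves_dh {n : ℕ} (y a b : EuclideanSpace ℝ (Fin n)) :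
    dh (T y a) (T y b) = dh a b := by
  have key : br (T y a) * br (T y b) - (inner ℝ (T y a) (T y b) : ℝ)
      = br a * br b - (inner ℝ a b : ℝ) := by
    rw [br_T, br_T, inner_T]
    have hy := br_sq y
    have hy1 : br y + 1 ≠ 0 := by have := br_pos y; linarith
    have hny : ‖y‖ ^ 2 = br y ^ 2 - 1 := by linarith
    rw [hny]
    field_simp
    ring
  rw [dh, dh, key]
end

section
/- Let A ⊆ ℝⁿ contain 0 and let u : A → ℝⁿ. Then u is isometric with respect to d_h and u(0) = 0 if and only if ⟨u(x), u(y)⟩ = ⟨x, y⟩ for all x, y ∈ A. -/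
lemma arcosh_inj_s9 {s t : ℝ} (hs : 1 ≤ s) (ht : 1 ≤ t) (h : arcosh s = arcosh t) : s = t := by
  unfold arcosh at h
  have ha : Real.sqrt (s ^ 2 - 1) ^ 2 = s ^ 2 - 1 := Real.sq_sqrt (by nlinarith)
  have hb : Real.sqrt (t ^ 2 - 1) ^ 2 = t ^ 2 - 1 := Real.sq_sqrt (by nlinarith)
  have ha0 : 0 ≤ Real.sqrt (s ^ 2 - 1) := Real.sqrt_nonneg _
  have hb0 : 0 ≤ Real.sqrt (t ^ 2 - 1) := Real.sqrt_nonneg _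
  have h1 : (0:ℝ) < s + Real.sqrt (s ^ 2 - 1) := by linarith
  have h2 : (0:ℝ) < t + Real.sqrt (t ^ 2 - 1) := by linarith
  have heq : s + Real.sqrt (s ^ 2 - 1) = t + Real.sqrt (t ^ 2 - 1) :=
    Real.log_injOn_pos (Set.mem_Ioi.mpr h1) (Set.mem_Ioi.mpr h2) h
  set a := Real.sqrt (s ^ 2 - 1)
  set b := Real.sqrt (t ^ 2 - 1)
  have key : (t - s) * (a + b + s + t) = 0 := by nlinarith
  have hpos : 0 < a + b + s + t := by linarith
  have : t - s = 0 := by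
    rcases mul_eq_zero.mp key with h' | h'
    · exact h'
    · linarith
  linarith

lemma one_le_br {n : ℕ} (x : EuclideanSpace ℝ (Fin n)) : 1 ≤ br x := by
  rw [br]
  have h : Real.sqrt 1 ≤ Real.sqrt (1 + ‖x‖ ^ 2) :=
    Real.sqrt_le_sqrt (by nlinarith [sq_nonneg ‖x‖])
  rwa [Real.sqrt_one] at h

lemma one_le_sub {n : ℕ} (x y : EuclideanSpace ℝ (Fin n)) :
    1 ≤ br x * br y - inner ℝ x y := by
  have h1 : (inner ℝ x y : ℝ) ≤ ‖x‖ * ‖y‖ := real_inner_le_norm x y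
  have h2 : 1 + ‖x‖ * ‖y‖ ≤ br x * br y := by
    rw [br, br, ← Real.sqrt_mul (show (0:ℝ) ≤ 1 + ‖x‖ ^ 2 by positivity) (1 + ‖y‖ ^ 2)]
    rw [show (1 + ‖x‖ * ‖y‖) = Real.sqrt ((1 + ‖x‖ * ‖y‖) ^ 2) from
      (Real.sqrt_sq (by positivity)).symm]
    apply Real.sqrt_le_sqrt
    nlinarith [sq_nonneg (‖x‖ - ‖y‖)]
  linarith

lemma br_zero {n : ℕ} : br (0 : EuclideanSpace ℝ (Fin n)) = 1 := by
  simp [br]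

lemma br_eq_of_norm_eq {n : ℕ} {x y : EuclideanSpace ℝ (Fin n)} (h : ‖x‖ = ‖y‖) :
    br x = br y := by rw [br, br, h]

theorem dh_isometric_iff_inner {n : ℕ} (A : Set (EuclideanSpace ℝ (Fin n)))
    (hA : (0 : EuclideanSpace ℝ (Fin n)) ∈ A)
    (u : EuclideanSpace ℝ (Fin n) → EuclideanSpace ℝ (Fin n)) :
    ((∀ x ∈ A, ∀ y ∈ A, dh (u x) (u y) = dh x y) ∧ u 0 = 0) ↔
    (∀ x ∈ A, ∀ y ∈ A, (inner ℝ (u x) (u y) : ℝ) = inner ℝ x y) := by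
  constructor
  · rintro ⟨hiso, hu0⟩ x hx y hy
    have key : ∀ z ∈ A, ∀ w ∈ A,
        br (u z) * br (u w) - (inner ℝ (u z) (u w) : ℝ) = br z * br w - inner ℝ z w := by
      intro z hz w hw
      exact arcosh_inj_s9 (one_le_sub _ _) (one_le_sub _ _) (hiso z hz w hw)
    have hbr : ∀ z ∈ A, br (u z) = br z := by
      intro z hz
      have h := key z hz 0 hA
      rw [hu0] at h
      simpa [br_zero, inner_zero_right] using h
    have h := key x hx y hy
    rw [hbr x hx, hbr y hy] at h
    linarith
  · intro h
    have hu0 : u 0 = 0 := by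
      have h0 := h 0 hA 0 hA
      rw [inner_zero_right] at h0
      exact inner_self_eq_zero.mp h0
    refine ⟨?_, hu0⟩
    intro x hx y hy
    have hnorm : ∀ z ∈ A, ‖u z‖ = ‖z‖ := by
      intro z hz
      have hz' := h z hz z hz
      rw [real_inner_self_eq_norm_sq, real_inner_self_eq_norm_sq] at hz'
      nlinarith [norm_nonneg (u z), norm_nonneg z, hz']
    rw [dh, dh, h x hx y hy, br_eq_of_norm_eq (hnorm x hx), br_eq_of_norm_eq (hnorm y hy)]
end

section
/- If c > 0 satisfies cosh(c·arcosh(t²)) = (cosh(c·arcosh(t)))² for all real t ≥ 1, then c = 1. -/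
lemma sqrt_sq_sub_one_le {t : ℝ} (ht : 1 ≤ t) : Real.sqrt (t ^ 2 - 1) ≤ t := by
  have h := Real.sqrt_le_sqrt (show t ^ 2 - 1 ≤ t ^ 2 by linarith)
  rwa [Real.sqrt_sq (by linarith)] at h

lemma arcosh_nonneg {t : ℝ} (ht : 1 ≤ t) : 0 ≤ arcosh t := by
  apply Real.log_nonneg
  nlinarith [Real.sqrt_nonneg (t ^ 2 - 1)]

lemma log_le_arcosh {t : ℝ} (ht : 1 ≤ t) : Real.log t ≤ arcosh t := by
  apply Real.log_le_log (by linarith)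
  nlinarith [Real.sqrt_nonneg (t ^ 2 - 1)]

lemma arcosh_le_log {t : ℝ} (ht : 1 ≤ t) : arcosh t ≤ Real.log (2 * t) := by
  apply Real.log_le_log (by positivity)
  nlinarith [sqrt_sq_sub_one_le ht]

lemma arcosh_double {t : ℝ} (ht : 1 ≤ t) :
    arcosh (2 * t ^ 2 - 1) = 2 * arcosh t := by
  have hs : (0:ℝ) ≤ t ^ 2 - 1 := by nlinarith
  have h1 : Real.sqrt ((2 * t ^ 2 - 1) ^ 2 - 1) = 2 * t * Real.sqrt (t ^ 2 - 1) := by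
    rw [show (2 * t ^ 2 - 1) ^ 2 - 1 = (2 * t) ^ 2 * (t ^ 2 - 1) by ring,
      Real.sqrt_mul (by positivity), Real.sqrt_sq (by positivity)]
  unfold arcosh
  rw [h1]
  have h2 : 2 * t ^ 2 - 1 + 2 * t * Real.sqrt (t ^ 2 - 1)
      = (t + Real.sqrt (t ^ 2 - 1)) ^ 2 := by
    have h3 := Real.sq_sqrt hs
    nlinarith [h3]
  rw [h2, Real.log_pow]
  push_cast
  ring

theorem cosh_functional_eq (c : ℝ) (hc : 0 < c)
    (h : ∀ t : ℝ, 1 ≤ t → Real.cosh (c * arcosh (t ^ 2)) = (Real.cosh (c * arcosh t)) ^ 2) :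
    c = 1 := by
  set F : ℝ → ℝ := fun u => Real.cosh (c * arcosh u) with hF
  -- the key recursion F (2u-1) = 2 F u - 1
  have key : ∀ u : ℝ, 1 ≤ u → F (2 * u - 1) = 2 * F u - 1 := by
    intro u hu
    have ht : 1 ≤ Real.sqrt u := by
      rw [show (1:ℝ) = Real.sqrt 1 by simp]
      exact Real.sqrt_le_sqrt hu
    have hsq : Real.sqrt u ^ 2 = u := Real.sq_sqrt (by linarith)
    have hd := arcosh_double ht
    rw [hsq] at hd
    have hh := h (Real.sqrt u) ht
    rw [hsq] at hh
    simp only [hF]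
    rw [hd, show c * (2 * arcosh (Real.sqrt u)) = 2 * (c * arcosh (Real.sqrt u)) by ring,
      Real.cosh_two_mul, ← hh]
    nlinarith [Real.cosh_sq_sub_sinh_sq (c * arcosh (Real.sqrt u)), hh]
  set K : ℝ := F 2 - 1 with hK
  have ind : ∀ n : ℕ, F (1 + 2 ^ n) = 1 + 2 ^ n * K := by
    intro n
    induction n with
    | zero => norm_num [hK]
    | succ n ih =>
      have h1 : (1:ℝ) ≤ 1 + 2 ^ n := le_add_of_nonneg_right (by positivity)
      have h2 := key (1 + 2 ^ n) h1
      rw [show (2:ℝ) * (1 + 2 ^ n) - 1 = 1 + 2 ^ (n + 1) by ring] at h2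
      rw [h2, ih]
      ring
  have hK0 : 0 < K := by
    have h2 : (0:ℝ) < arcosh 2 := by
      have := log_le_arcosh (show (1:ℝ) ≤ 2 by norm_num)
      have hl2 : (0:ℝ) < Real.log 2 := Real.log_pos (by norm_num)
      linarith
    have : (1:ℝ) < Real.cosh (c * arcosh 2) :=
      Real.one_lt_cosh.2 (by positivity)
    simp only [hK, hF]
    linarith
  have L := Real.log 2
  have hL : 0 < Real.log 2 := Real.log_pos (by norm_num)
  -- bounds on F
  have upper : ∀ u : ℝ, 1 ≤ u → F u ≤ Real.exp (c * Real.log (2 * u)) := by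
    intro u hu
    have h0 : 0 ≤ c * arcosh u := mul_nonneg hc.le (arcosh_nonneg hu)
    have h1 : Real.cosh (c * arcosh u) ≤ Real.exp (c * arcosh u) := by
      rw [Real.cosh_eq]
      have := Real.exp_le_exp.2 (neg_le_self h0)
      linarith
    have h2 : Real.exp (c * arcosh u) ≤ Real.exp (c * Real.log (2 * u)) :=
      Real.exp_le_exp.2 (mul_le_mul_of_nonneg_left (arcosh_le_log hu) hc.le)
    exact h1.trans h2
  have lower : ∀ u : ℝ, 1 ≤ u → Real.exp (c * Real.log u) / 2 ≤ F u := by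
    intro u hu
    have h1 : Real.exp (c * Real.log u) ≤ Real.exp (c * arcosh u) :=
      Real.exp_le_exp.2 (mul_le_mul_of_nonneg_left (log_le_arcosh hu) hc.le)
    have h2 : Real.exp (c * arcosh u) / 2 ≤ Real.cosh (c * arcosh u) := by
      rw [Real.cosh_eq]
      have := (Real.exp_pos (-(c * arcosh u))).le
      linarith
    simp only [hF]
    linarith
  -- 2^n = exp (n * log 2)
  have pow2 : ∀ n : ℕ, (2:ℝ) ^ n = Real.exp (n * Real.log 2) := by
    intro n
    rw [Real.exp_nat_mul, Real.exp_log (by norm_num)]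
  by_contra hne
  rcases lt_or_gt_of_ne hne with hlt | hgt
  · -- c < 1 : use upper bound
    obtain ⟨n, hn⟩ := exists_nat_gt ((4 / K) / ((1 - c) * Real.log 2))
    have hu1 : (1:ℝ) ≤ 1 + 2 ^ n := le_add_of_nonneg_right (by positivity)
    have hup := upper (1 + 2 ^ n) hu1
    rw [ind n] at hup
    have hlog : Real.log (2 * (1 + 2 ^ n)) ≤ (n + 2) * Real.log 2 := by
      have h1 : (2:ℝ) * (1 + 2 ^ n) ≤ 2 ^ (n + 2) := by
        have : (1:ℝ) ≤ 2 ^ n := one_le_pow₀ (by norm_num)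
        rw [pow_succ, pow_succ]
        nlinarith
      have h2 := Real.log_le_log (by positivity) h1
      rwa [Real.log_pow, Nat.cast_add] at h2
      -- gives log (2*(1+2^n)) ≤ (n+2) * log 2
    have hexp : Real.exp (c * Real.log (2 * (1 + 2 ^ n)))
        ≤ Real.exp (c * ((n + 2) * Real.log 2)) :=
      Real.exp_le_exp.2 (mul_le_mul_of_nonneg_left hlog hc.le)
    have hmain : (2:ℝ) ^ n * K ≤ Real.exp (c * ((n + 2) * Real.log 2)) := by
      nlinarith [hup, hexp]
    -- rewrite 2^n as exp
    rw [pow2 n] at hmain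
    -- exp(n log2) K ≤ exp(c n log2) * exp(2 c log2) ≤ exp(c n log 2) * 4
    have hsplit : Real.exp (c * ((n + 2) * Real.log 2))
        = Real.exp (c * n * Real.log 2) * Real.exp (2 * c * Real.log 2) := by
      rw [← Real.exp_add]
      ring_nf
    have h4 : Real.exp (2 * c * Real.log 2) ≤ 4 := by
      have h5 : Real.exp (2 * c * Real.log 2) ≤ Real.exp (2 * Real.log 2) := by
        apply Real.exp_le_exp.2
        nlinarith
      have h6 : Real.exp (2 * Real.log 2) = 4 := by
        rw [show (2:ℝ) * Real.log 2 = Real.log 2 + Real.log 2 by ring, Real.exp_add,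
          Real.exp_log (by norm_num)]
        norm_num
      linarith
    have hfac : Real.exp ((n:ℝ) * Real.log 2)
        = Real.exp (c * n * Real.log 2) * Real.exp ((1 - c) * n * Real.log 2) := by
      rw [← Real.exp_add]
      ring_nf
    have hEpos : (0:ℝ) < Real.exp (c * n * Real.log 2) := Real.exp_pos _
    have hfinal : Real.exp ((1 - c) * n * Real.log 2) * K ≤ 4 := by
      rw [hfac, hsplit] at hmain
      nlinarith [hmain, h4, hEpos, Real.exp_pos ((1 - c) * (n:ℝ) * Real.log 2), hK0]
    -- but exp((1-c) n log2) ≥ 1 + (1-c) n log 2 > 4/K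
    have hbig : (4:ℝ) / K < (1 - c) * n * Real.log 2 := by
      have hd : 0 < (1 - c) * Real.log 2 := by nlinarith
      calc (4:ℝ) / K = ((4 / K) / ((1 - c) * Real.log 2)) * ((1 - c) * Real.log 2) := by
            field_simp
        _ < n * ((1 - c) * Real.log 2) := by
            apply mul_lt_mul_of_pos_right hn hd
        _ = (1 - c) * n * Real.log 2 := by ring
    have hexpge := Real.add_one_le_exp ((1 - c) * n * Real.log 2)
    have : (4:ℝ) / K < Real.exp ((1 - c) * n * Real.log 2) := by linarith
    have h7 : (4:ℝ) < Real.exp ((1 - c) * n * Real.log 2) * K := by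
      rw [div_lt_iff₀ hK0] at this
      linarith
    linarith
  · -- c > 1 : use lower bound
    obtain ⟨n, hn⟩ := exists_nat_gt ((2 * (1 + K)) / ((c - 1) * Real.log 2))
    have hu1 : (1:ℝ) ≤ 1 + 2 ^ n := le_add_of_nonneg_right (by positivity)
    have hlo := lower (1 + 2 ^ n) hu1
    rw [ind n] at hlo
    have hlog : (n:ℝ) * Real.log 2 ≤ Real.log (1 + 2 ^ n) := by
      have h1 : (2:ℝ) ^ n ≤ 1 + 2 ^ n := by linarith
      have h2 := Real.log_le_log (by positivity) h1
      rwa [Real.log_pow] at h2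
    have hexp : Real.exp (c * ((n:ℝ) * Real.log 2))
        ≤ Real.exp (c * Real.log (1 + 2 ^ n)) :=
      Real.exp_le_exp.2 (mul_le_mul_of_nonneg_left hlog hc.le)
    have h2n1 : (1:ℝ) ≤ 2 ^ n := one_le_pow₀ (by norm_num)
    have hmain : Real.exp (c * ((n : ℝ) * Real.log 2)) ≤ 2 ^ n * (2 * (1 + K)) := by
      nlinarith [hexp, hlo, hK0, h2n1]
    rw [pow2 n] at hmain
    have hfac : Real.exp (c * ((n:ℝ) * Real.log 2))
        = Real.exp ((n:ℝ) * Real.log 2) * Real.exp ((c - 1) * n * Real.log 2) := by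
      rw [← Real.exp_add]
      ring_nf
    have hEpos : (0:ℝ) < Real.exp ((n:ℝ) * Real.log 2) := Real.exp_pos _
    have hfinal : Real.exp ((c - 1) * n * Real.log 2) ≤ 2 * (1 + K) := by
      rw [hfac] at hmain
      have := (mul_le_mul_iff_right₀ hEpos).1 hmain
      linarith [this]
    have hbig : (2 * (1 + K)) < (c - 1) * n * Real.log 2 := by
      have hd : 0 < (c - 1) * Real.log 2 := by nlinarith
      calc 2 * (1 + K) = ((2 * (1 + K)) / ((c - 1) * Real.log 2)) * ((c - 1) * Real.log 2) := by
            field_simp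
        _ < n * ((c - 1) * Real.log 2) := mul_lt_mul_of_pos_right hn hd
        _ = (c - 1) * n * Real.log 2 := by ring
    have hexpge := Real.add_one_le_exp ((c - 1) * n * Real.log 2)
    linarith
end

section
/- For any unit vector z ∈ ℝⁿ, the map γ_z : ℝ → ℝⁿ, γ_z(t) = sinh(t)·z, is an isometric embedding of (ℝ, Euclidean metric) into (ℝⁿ, d_h); i.e., d_h(γ_z(s), γ_z(t)) = |s - t| for all s, t ∈ ℝ. -/
lemma arcosh_cosh (u : ℝ) : arcosh (Real.cosh u) = |u| := by
  have h1 : Real.cosh u ^ 2 - 1 = Real.sinh u ^ 2 := by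
    have := Real.cosh_sq_sub_sinh_sq u; nlinarith
  rw [arcosh, h1, Real.sqrt_sq_eq_abs]
  rcases le_total 0 u with hu | hu
  · rw [abs_of_nonneg (Real.sinh_nonneg_iff.mpr hu), abs_of_nonneg hu,
      Real.cosh_eq, Real.sinh_eq]
    rw [show (Real.exp u + Real.exp (-u)) / 2 + (Real.exp u - Real.exp (-u)) / 2
      = Real.exp u by ring, Real.log_exp]
  · have : Real.sinh u ≤ 0 := Real.sinh_nonpos_iff.mpr hu
    rw [abs_of_nonpos this, abs_of_nonpos hu, Real.cosh_eq, Real.sinh_eq]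
    rw [show (Real.exp u + Real.exp (-u)) / 2 + -((Real.exp u - Real.exp (-u)) / 2)
      = Real.exp (-u) by ring, Real.log_exp]

theorem gamma_isometric {n : ℕ} (z : EuclideanSpace ℝ (Fin n)) (hz : ‖z‖ = 1)
    (s t : ℝ) : dh (Real.sinh s • z) (Real.sinh t • z) = |s - t| := by
  have hbr : ∀ u : ℝ, br (Real.sinh u • z) = Real.cosh u := by
    intro u
    rw [br, norm_smul, hz, mul_one, Real.norm_eq_abs, sq_abs]
    rw [show (1 : ℝ) + Real.sinh u ^ 2 = Real.cosh u ^ 2 by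
      have := Real.cosh_sq_sub_sinh_sq u; nlinarith]
    exact Real.sqrt_sq (Real.cosh_pos u).le
  have hinner : (inner ℝ (Real.sinh s • z) (Real.sinh t • z) : ℝ)
      = Real.sinh s * Real.sinh t := by
    rw [real_inner_smul_left, real_inner_smul_right, real_inner_self_eq_norm_sq, hz]
    ring
  rw [dh, hbr, hbr, hinner, ← Real.cosh_sub, arcosh_cosh]
end
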